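/- For integers i, m with n^{0.6} < i and |m| > i^{0.6}, the binomial coefficient satisfies C(2i − m, i) ≤ (4^i / 2^m) · e^{−n^{0.1}} for all sufficiently large n. (Large-deviation bound for central binomial-type coefficients.) -/

import Mathlib

set_option maxRecDepth 10000

lemma choose_mul_pow_le' (a b : ℕ) (t : ℝ) (ht : 0 ≤ t) :
    (a.choose b : ℝ) * t ^ b ≤ (1 + t) ^ a := by
  rcases le_or_gt b a with hb | hb
  · calc (a.choose b : ℝ) * t ^ b = t ^ b * 1 ^ (a - b) * a.choose b := by ring
    _ ≤ ∑ k ∈ Finset.range (a+1), t ^ k * 1 ^ (a-k) * a.choose k :=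
        Finset.single_le_sum (f := fun k => t ^ k * 1 ^ (a-k) * (a.choose k : ℝ))
          (fun k _ => by positivity)
          (Finset.mem_range.2 (Nat.lt_succ_of_le hb))
    _ = (t + 1) ^ a := (add_pow t 1 a).symm
    _ = (1 + t) ^ a := by ring
  · rw [Nat.choose_eq_zero_of_lt hb]
    simp
    positivity

lemma exp_sub_sq_le' (x : ℝ) (hx : 0 ≤ x) : Real.exp (x - x^2) ≤ 1 + x := by
  have h1 : (0:ℝ) < 1 + x := by linarith
  have h2 : Real.log (1/(1+x)) ≤ 1/(1+x) - 1 := Real.log_le_sub_one_of_pos (by positivity)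
  rw [Real.log_div one_ne_zero (ne_of_gt h1), Real.log_one] at h2
  have h4 : x - x^2 ≤ x/(1+x) := by
    rw [le_div_iff₀ h1]; nlinarith
  have h5 : 1/(1+x) - 1 = -(x/(1+x)) := by field_simp; ring
  have h3 : x - x^2 ≤ Real.log (1+x) := by
    rw [h5] at h2; linarith
  calc Real.exp (x - x^2) ≤ Real.exp (Real.log (1+x)) := Real.exp_le_exp.2 h3
  _ = 1 + x := Real.exp_log h1

lemma est1' (a b : ℕ) (u : ℝ) (hu : 0 ≤ u) :
    (a.choose b : ℝ) ≤ 2 ^ a * Real.exp ((a:ℝ) * (u/2) - b * (u - u^2)) := by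
  have h1 : (a.choose b : ℝ) * (1+u)^b ≤ (2 + u)^a := by
    have h := choose_mul_pow_le' a b (1+u) (by linarith)
    have : (1 + (1+u) : ℝ) = 2 + u := by ring
    rwa [this] at h
  have h2 : ((2:ℝ)+u)^a ≤ 2^a * Real.exp ((a:ℝ)*(u/2)) := by
    have he : (1 + u/2 : ℝ) ≤ Real.exp (u/2) := by
      have := Real.add_one_le_exp (u/2); linarith
    calc ((2:ℝ)+u)^a = 2^a * (1+u/2)^a := by rw [← mul_pow]; ring_nf
    _ ≤ 2^a * (Real.exp (u/2))^a := by
        gcongr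
    _ = 2^a * Real.exp ((a:ℝ)*(u/2)) := by rw [← Real.exp_nat_mul]
  have h3 : Real.exp ((b:ℝ)*(u - u^2)) ≤ (1+u)^b := by
    calc Real.exp ((b:ℝ)*(u-u^2)) = (Real.exp (u - u^2))^b := by rw [← Real.exp_nat_mul]
    _ ≤ (1+u)^b := pow_le_pow_left₀ (Real.exp_pos _).le (exp_sub_sq_le' u hu) b
  have hC0 : (0:ℝ) ≤ (a.choose b : ℝ) := by positivity
  have h4 : (a.choose b : ℝ) * Real.exp ((b:ℝ)*(u - u^2)) ≤ 2^a * Real.exp ((a:ℝ)*(u/2)) :=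
    le_trans (by gcongr) (le_trans h1 h2)
  rw [Real.exp_sub, ← mul_div_assoc]
  exact (le_div_iff₀ (Real.exp_pos _)).2 h4

lemma est2' (a b : ℕ) (u : ℝ) (hu : 0 ≤ u) :
    (a.choose b : ℝ) ≤ 2 ^ a * Real.exp ((a:ℝ) * (u/2) - a * (u - u^2) + b * u) := by
  have h1u : (0:ℝ) < 1 + u := by linarith
  have h1 : (a.choose b : ℝ) * (1+u)^a ≤ (2 + u)^a * (1+u)^b := by
    have h := choose_mul_pow_le' a b (1/(1+u)) (by positivity)
    have he : (1 + 1/(1+u) : ℝ) = (2+u)/(1+u) := by field_simp; ring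
    rw [he, div_pow, div_pow, one_pow, ← div_eq_mul_one_div,
      div_le_div_iff₀ (by positivity) (by positivity)] at h
    nlinarith [h]
  have h2 : ((2:ℝ)+u)^a ≤ 2^a * Real.exp ((a:ℝ)*(u/2)) := by
    have he : (1 + u/2 : ℝ) ≤ Real.exp (u/2) := by
      have := Real.add_one_le_exp (u/2); linarith
    calc ((2:ℝ)+u)^a = 2^a * (1+u/2)^a := by rw [← mul_pow]; ring_nf
    _ ≤ 2^a * (Real.exp (u/2))^a := by gcongr
    _ = 2^a * Real.exp ((a:ℝ)*(u/2)) := by rw [← Real.exp_nat_mul]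
  have h3 : Real.exp ((a:ℝ)*(u - u^2)) ≤ (1+u)^a := by
    calc Real.exp ((a:ℝ)*(u-u^2)) = (Real.exp (u - u^2))^a := by rw [← Real.exp_nat_mul]
    _ ≤ (1+u)^a := pow_le_pow_left₀ (Real.exp_pos _).le (exp_sub_sq_le' u hu) a
  have h3b : ((1:ℝ)+u)^b ≤ Real.exp ((b:ℝ)*u) := by
    have he : (1 + u : ℝ) ≤ Real.exp u := by
      have := Real.add_one_le_exp u; linarith
    calc ((1:ℝ)+u)^b ≤ (Real.exp u)^b := by gcongr
    _ = Real.exp ((b:ℝ)*u) := by rw [← Real.exp_nat_mul]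
  have hC0 : (0:ℝ) ≤ (a.choose b : ℝ) := by positivity
  have h4 : (a.choose b : ℝ) * Real.exp ((a:ℝ)*(u - u^2)) ≤
      2^a * Real.exp ((a:ℝ)*(u/2)) * Real.exp ((b:ℝ)*u) := by
    calc (a.choose b : ℝ) * Real.exp ((a:ℝ)*(u - u^2)) ≤ (a.choose b : ℝ) * (1+u)^a := by gcongr
    _ ≤ (2 + u)^a * (1+u)^b := h1
    _ ≤ (2^a * Real.exp ((a:ℝ)*(u/2))) * Real.exp ((b:ℝ)*u) := by
        apply mul_le_mul h2 h3b (by positivity) (by positivity)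
  have heq : (a:ℝ) * (u/2) - a * (u - u^2) + b * u
      = ((a:ℝ)*(u/2) + b*u) - a*(u - u^2) := by ring
  rw [heq, Real.exp_sub, Real.exp_add, mul_div_assoc' (2^a : ℝ), ← mul_assoc]
  exact (le_div_iff₀ (Real.exp_pos _)).2 h4

lemma arith_pos' (x i t msq : ℝ) (hx : 0 ≤ x) (hi : 0 < i)
    (h1 : t * i ≤ msq) (h2 : 64 * x ≤ t) : x * (16 * i) ≤ msq := by
  nlinarith

lemma arith_neg' (x i d t : ℝ) (hx : 0 ≤ x) (hi : 0 < i) (hd : 0 < d)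
    (h1 : t * i ≤ d ^ 2) (h2 : 64 * x ≤ t) (h3 : 64 * x ≤ i) :
    x * (16 * (2 * i + d)) ≤ d ^ 2 := by
  rcases le_total d i with hc | hc
  · nlinarith
  · nlinarith

/-- Large-deviation bound for central binomial-type coefficients: for all
sufficiently large `n`, if `n^{0.6} < i` and `|m| > i^{0.6}` then
`C(2i - m, i) ≤ (4^i / 2^m) · e^{-n^{0.1}}`. -/
theorem binomial_large_deviation :
    ∃ N : ℕ, ∀ n : ℕ, N ≤ n → ∀ i : ℕ, ∀ m : ℤ,
      (n : ℝ) ^ (0.6 : ℝ) < (i : ℝ) →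
      (i : ℝ) ^ (0.6 : ℝ) < |(m : ℝ)| →
      ((Nat.choose (2 * (i : ℤ) - m).toNat i : ℕ) : ℝ)
        ≤ (4 : ℝ) ^ i / (2 : ℝ) ^ m * Real.exp (-(n : ℝ) ^ (0.1 : ℝ)) := by
  refine ⟨2^300, fun n hn i m hi hm => ?_⟩
  have hn0 : (0:ℝ) < n := by
    have : (0:ℕ) < n := lt_of_lt_of_le (by positivity) hn
    exact_mod_cast this
  have hnR : ((2:ℝ))^(300:ℕ) ≤ (n:ℝ) := by exact_mod_cast hn
  have hi0 : (0:ℝ) < (i:ℝ) := lt_of_le_of_lt (Real.rpow_nonneg hn0.le _) hi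
  have hi1 : (1:ℝ) ≤ (i:ℝ) := by
    have : (0:ℕ) < i := by exact_mod_cast hi0
    exact_mod_cast this
  have hn02 : (64:ℝ) ≤ (n:ℝ)^(0.02:ℝ) := by
    have h1 : ((2:ℝ)^(300:ℕ))^(0.02:ℝ) ≤ (n:ℝ)^(0.02:ℝ) :=
      Real.rpow_le_rpow (by positivity) hnR (by norm_num)
    have h2 : ((2:ℝ)^(300:ℕ))^(0.02:ℝ) = 64 := by
      rw [← Real.rpow_natCast 2 300, ← Real.rpow_mul (by norm_num)]
      rw [show ((300:ℕ):ℝ) * (0.02:ℝ) = ((6:ℕ):ℝ) by norm_num, Real.rpow_natCast]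
      norm_num
    linarith
  have hn01 : (0:ℝ) ≤ (n:ℝ)^(0.1:ℝ) := Real.rpow_nonneg hn0.le _
  have hrp : (n:ℝ)^(0.12:ℝ) ≤ (i:ℝ)^(0.2:ℝ) := by
    have h1 : ((n:ℝ)^(0.6:ℝ))^(0.2:ℝ) ≤ (i:ℝ)^(0.2:ℝ) :=
      Real.rpow_le_rpow (by positivity) hi.le (by norm_num)
    rwa [← Real.rpow_mul hn0.le, show (0.6:ℝ)*(0.2:ℝ) = (0.12:ℝ) by norm_num] at h1
  have hkey : 64 * (n:ℝ)^(0.1:ℝ) ≤ (i:ℝ)^(0.2:ℝ) := by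
    have h1 : (n:ℝ)^(0.02:ℝ) * (n:ℝ)^(0.1:ℝ) = (n:ℝ)^(0.12:ℝ) := by
      rw [← Real.rpow_add hn0]; norm_num
    nlinarith [hn01]
  have hi02_le_i : (i:ℝ)^(0.2:ℝ) ≤ (i:ℝ) := by
    have h1 := Real.rpow_le_rpow_of_exponent_le hi1 (show (0.2:ℝ) ≤ 1 by norm_num)
    rwa [Real.rpow_one] at h1
  have hkey2 : 64 * (n:ℝ)^(0.1:ℝ) ≤ (i:ℝ) := le_trans hkey hi02_le_i
  have hm2 : (i:ℝ)^(0.2:ℝ) * (i:ℝ) ≤ (m:ℝ)^2 := by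
    have h1 : ((i:ℝ)^(0.6:ℝ))^(2:ℕ) ≤ |(m:ℝ)|^(2:ℕ) :=
      pow_le_pow_left₀ (Real.rpow_nonneg hi0.le _) hm.le 2
    rw [sq_abs] at h1
    have h2 : ((i:ℝ)^(0.6:ℝ))^(2:ℕ) = (i:ℝ)^(1.2:ℝ) := by
      rw [← Real.rpow_natCast ((i:ℝ)^(0.6:ℝ)) 2, ← Real.rpow_mul hi0.le]
      norm_num
    have h3 : (i:ℝ)^(1.2:ℝ) = (i:ℝ)^(0.2:ℝ) * (i:ℝ) := by
      rw [show (1.2:ℝ) = (0.2:ℝ) + 1 by norm_num, Real.rpow_add hi0, Real.rpow_one]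
    rw [h2, h3] at h1
    exact h1
  set a := (2*(i:ℤ) - m).toNat with ha
  rcases lt_or_ge a i with hia | hia
  · rw [Nat.choose_eq_zero_of_lt hia]
    push_cast
    positivity
  have hiN : 1 ≤ i := by exact_mod_cast hi1
  have haZ : (a:ℤ) = 2*(i:ℤ) - m := by
    rcases le_or_gt 0 (2*(i:ℤ) - m) with h | h
    · exact Int.toNat_of_nonneg h
    · exfalso
      have h0 : a = 0 := by simpa [ha] using Int.toNat_of_nonpos h.le
      omega
  have hpow : ((2:ℝ))^a = (4:ℝ)^i / (2:ℝ)^m := by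
    have h1 : ((2:ℝ))^(a:ℤ) = (2:ℝ)^(2*(i:ℤ)) / (2:ℝ)^m := by
      rw [haZ, zpow_sub₀ (by norm_num : (2:ℝ) ≠ 0)]
    rw [zpow_natCast] at h1
    rw [h1]
    congr 1
    rw [show (2*(i:ℤ)) = ((2*i : ℕ) : ℤ) by push_cast; ring, zpow_natCast, pow_mul]
    norm_num
  rcases lt_trichotomy m 0 with hmneg | hmz | hmpos
  · -- m < 0
    have hdR : (0:ℝ) < -(m:ℝ) := by
      have : (m:ℝ) < 0 := by exact_mod_cast hmneg
      linarith
    set d : ℝ := -(m:ℝ) with hd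
    have haR : (a:ℝ) = 2*(i:ℝ) + d := by
      have h : ((a:ℤ):ℝ) = 2*(i:ℝ) - (m:ℝ) := by rw [haZ]; push_cast; ring
      push_cast at h
      rw [hd]; linarith
    have ha0 : (0:ℝ) < (a:ℝ) := by rw [haR]; linarith
    set u : ℝ := d/(4*(a:ℝ)) with hu
    have hu0 : 0 ≤ u := by positivity
    have hb := est2' a i u hu0
    have hiR : (i:ℝ) = ((a:ℝ) - d)/2 := by rw [haR]; ring
    have heq : (a:ℝ)*(u/2) - (a:ℝ)*(u - u^2) + (i:ℝ)*u = -(d^2/(16*(a:ℝ))) := by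
      rw [hiR, hu]; field_simp; ring
    have hd2 : (i:ℝ)^(0.2:ℝ) * (i:ℝ) ≤ d^2 := by
      have : d^2 = (m:ℝ)^2 := by rw [hd]; ring
      rw [this]; exact hm2
    have hexp : (a:ℝ)*(u/2) - (a:ℝ)*(u - u^2) + (i:ℝ)*u ≤ -(n:ℝ)^(0.1:ℝ) := by
      rw [heq, neg_le_neg_iff, le_div_iff₀ (by positivity), haR]
      exact arith_neg' _ _ _ _ hn01 hi0 hdR hd2 hkey hkey2
    calc ((a.choose i : ℕ):ℝ)
        ≤ 2^a * Real.exp ((a:ℝ)*(u/2) - (a:ℝ)*(u - u^2) + (i:ℝ)*u) := hb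
    _ ≤ 2^a * Real.exp (-(n:ℝ)^(0.1:ℝ)) := mul_le_mul_of_nonneg_left (Real.exp_le_exp.2 hexp) (by positivity)
    _ = (4:ℝ)^i/(2:ℝ)^m * Real.exp (-(n:ℝ)^(0.1:ℝ)) := by rw [hpow]
  · -- m = 0 : contradiction
    exfalso
    rw [hmz] at hm
    simp at hm
    exact absurd hm (not_lt.2 (Real.rpow_nonneg hi0.le _))
  · -- m > 0
    have hmR : (0:ℝ) < (m:ℝ) := by exact_mod_cast hmpos
    set u : ℝ := (m:ℝ)/(4*(i:ℝ)) with hu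
    have hu0 : 0 ≤ u := by positivity
    have hb := est1' a i u hu0
    have haR : (a:ℝ) = 2*(i:ℝ) - (m:ℝ) := by
      have h : ((a:ℤ):ℝ) = 2*(i:ℝ) - (m:ℝ) := by rw [haZ]; push_cast; ring
      push_cast at h
      linarith
    have heq : (a:ℝ)*(u/2) - (i:ℝ)*(u - u^2) = -((m:ℝ)^2/(16*(i:ℝ))) := by
      rw [haR, hu]; field_simp; ring
    have hexp : (a:ℝ)*(u/2) - (i:ℝ)*(u - u^2) ≤ -(n:ℝ)^(0.1:ℝ) := by
      rw [heq, neg_le_neg_iff, le_div_iff₀ (by positivity)]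
      exact arith_pos' _ _ _ _ hn01 hi0 hm2 hkey
    calc ((a.choose i : ℕ):ℝ)
        ≤ 2^a * Real.exp ((a:ℝ)*(u/2) - (i:ℝ)*(u - u^2)) := hb
    _ ≤ 2^a * Real.exp (-(n:ℝ)^(0.1:ℝ)) := mul_le_mul_of_nonneg_left (Real.exp_le_exp.2 hexp) (by positivity)
    _ = (4:ℝ)^i/(2:ℝ)^m * Real.exp (-(n:ℝ)^(0.1:ℝ)) := by rw [hpow]
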